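/- For every natural number n, ∑_{k=0}^{⌊n/2⌋} (−1/4)^k C(n−k, k) = (n+1) · 2^{−n}. -/

import Mathlib

private def gsum (n : ℕ) : ℚ :=
  ∑ k ∈ Finset.range (n + 1), (-1 / 4 : ℚ) ^ k * ((n - k).choose k : ℚ)

private lemma gsum_eq_half (n : ℕ) :
    gsum n = ∑ k ∈ Finset.range (n / 2 + 1), (-1 / 4 : ℚ) ^ k * ((n - k).choose k : ℚ) := by
  unfold gsum
  symm
  apply Finset.sum_subset
  · intro x hx
    simp only [Finset.mem_range] at *
    omega
  · intro x hx hx'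
    simp only [Finset.mem_range] at *
    have : (n - x).choose x = 0 := Nat.choose_eq_zero_of_lt (by omega)
    simp [this]

private lemma gsum_rec (n : ℕ) : gsum (n + 2) = gsum (n + 1) - (1 / 4) * gsum n := by
  have h2 : gsum (n + 2)
      = 1 + ∑ j ∈ Finset.range (n + 1), (-1 / 4 : ℚ) ^ (j + 1) * ((n + 1 - j).choose (j + 1) : ℚ) := by
    unfold gsum
    rw [Finset.sum_range_succ]
    have hz : ((n + 2 - (n + 2)).choose (n + 2) : ℚ) = 0 := by simp
    rw [hz, mul_zero, add_zero, Finset.sum_range_succ']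
    simp only [pow_zero, one_mul, Nat.sub_zero, Nat.choose_zero_right, Nat.cast_one]
    rw [add_comm]
    congr 1
    apply Finset.sum_congr rfl
    intro j hj
    simp only [Finset.mem_range] at hj
    have : n + 2 - (j + 1) = n + 1 - j := by omega
    rw [this]
  have hpascal : ∀ j ∈ Finset.range (n + 1),
      ((n + 1 - j).choose (j + 1) : ℚ) = ((n - j).choose (j + 1) : ℚ) + ((n - j).choose j : ℚ) := by
    intro j hj
    simp only [Finset.mem_range] at hj
    have h : n + 1 - j = (n - j) + 1 := by omega
    rw [h, Nat.choose_succ_succ]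
    push_cast
    ring
  have h3 : gsum (n + 1)
      = 1 + ∑ j ∈ Finset.range (n + 1), (-1 / 4 : ℚ) ^ (j + 1) * ((n - j).choose (j + 1) : ℚ) := by
    unfold gsum
    rw [Finset.sum_range_succ']
    simp only [pow_zero, one_mul, Nat.sub_zero, Nat.choose_zero_right, Nat.cast_one]
    rw [add_comm]
    congr 1
    apply Finset.sum_congr rfl
    intro j hj
    simp only [Finset.mem_range] at hj
    have : n + 1 - (j + 1) = n - j := by omega
    rw [this]
  rw [h2]
  rw [Finset.sum_congr rfl (fun j hj => by rw [hpascal j hj, mul_add])]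
  rw [Finset.sum_add_distrib]
  have h4 : ∑ j ∈ Finset.range (n + 1), (-1 / 4 : ℚ) ^ (j + 1) * ((n - j).choose j : ℚ)
      = (-1 / 4) * gsum n := by
    unfold gsum
    rw [Finset.mul_sum]
    apply Finset.sum_congr rfl
    intro j _
    ring
  rw [h4, h3]
  ring

private lemma gsum_formula (n : ℕ) : gsum n = (n + 1 : ℚ) / 2 ^ n := by
  induction n using Nat.twoStepInduction with
  | zero => simp [gsum]
  | one => norm_num [gsum, Finset.sum_range_succ]
  | more n ih1 ih2 =>
    rw [gsum_rec, ih1, ih2]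
    have : (2 : ℚ) ^ n ≠ 0 := by positivity
    field_simp
    push_cast
    ring

/-- `∑_{k=0}^{⌊n/2⌋} (−1/4)^k C(n−k, k) = (n+1)·2^{−n}`. -/
theorem diagonal_binomial_sum_degenerate (n : ℕ) :
    ∑ k ∈ Finset.range (n / 2 + 1), (-1 / 4 : ℚ) ^ k * ((n - k).choose k : ℚ)
      = (n + 1 : ℚ) / 2 ^ n := by
  rw [← gsum_eq_half, gsum_formula]
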